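/- Let 𝒳 = {0,1}, let δ_n be the Hamming distance on 𝒳^n, let P be the Bernoulli(1/2) distribution and Q the Bernoulli(3/4) distribution on 𝒳, and let X = {X^n} be the mixed information source with Pr[X^n = x^n] = (1/2)∏_{i=1}^n P(x_i) + (1/2)∏_{i=1}^n Q(x_i). With logarithms to base 2 and 0 < D ≤ 1/2, a real number R satisfies R ≥ inf_Y Ī(X;Y), where the infimum is over all general information sources Y = {Y^n} on 𝒳^n with p-limsup_{n→∞} (1/n) δ_n(X^n, Y^n) ≤ D, if and only if R ≥ h(1/2) − h(D) = 1 − h(D), where h(u) = −u log₂ u − (1−u) log₂(1−u) is the binary entropy function. -/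

import Mathlib

open scoped BigOperators Classical
open Filter

/-- Words of length `n` over the alphabet `𝒳`. -/
abbrev Word (𝒳 : Type) (n : ℕ) : Type := Fin n → 𝒳

/-- A probability distribution on a finite type, given by its probability mass function. -/
structure FinDist (Ω : Type) [Fintype Ω] where
  p : Ω → ℝ
  nonneg : ∀ ω, 0 ≤ p ω
  sum_one : ∑ ω, p ω = 1

/-- Probability of an event. -/
noncomputable def FinDist.prob {Ω : Type} [Fintype Ω] (μ : FinDist Ω) (E : Ω → Prop) : ℝ :=
  ∑ ω, if E ω then μ.p ω else 0

/-- Pushforward (distribution of `h(X)` when `X ∼ μ`). -/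
noncomputable def FinDist.map {Ω Ω' : Type} [Fintype Ω] [Fintype Ω']
    (μ : FinDist Ω) (h : Ω → Ω') : FinDist Ω' where
  p ω' := ∑ ω, if h ω = ω' then μ.p ω else 0
  nonneg ω' := Finset.sum_nonneg fun ω _ => by
    by_cases hh : h ω = ω' <;> simp [hh, μ.nonneg ω]
  sum_one := by
    rw [Finset.sum_comm]
    simpa using μ.sum_one

/-- Variational distance `σ(μ, ν) = (1/2) ∑_x |μ(x) − ν(x)|`. -/
noncomputable def tvDist {Ω : Type} [Fintype Ω] (μ ν : FinDist Ω) : ℝ :=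
  (∑ ω, |μ.p ω - ν.p ω|) / 2

/-- `p-limsup_{n→∞} Z_n = inf { α | lim_n Pr[Z_n > α] = 0 }`. -/
noncomputable def plimsup {Ω : ℕ → Type} [∀ n, Fintype (Ω n)]
    (μ : ∀ n, FinDist (Ω n)) (Z : ∀ n, Ω n → ℝ) : ℝ :=
  sInf {α : ℝ | Tendsto (fun n => (μ n).prob fun ω => α < Z n ω) atTop (nhds 0)}

/-- `F_X(R) = limsup_n Pr[(1/n) log(1/P_{X^n}(X^n)) ≥ R]`, logarithm to base `b`. -/
noncomputable def FX {𝒳 : Type} [Fintype 𝒳] (b : ℝ)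
    (X : ∀ n, FinDist (Word 𝒳 n)) (R : ℝ) : ℝ :=
  limsup (fun n => (X n).prob fun x => R ≤ Real.logb b (1 / (X n).p x) / n) atTop

/-- Spectral sup-mutual information rate `Ī(X;Y)` of a joint source `W` (whose first
marginal is the source), logarithm to base `b`. -/
noncomputable def Ibar {𝒳 : Type} [Fintype 𝒳] (b : ℝ)
    (W : ∀ n, FinDist (Word 𝒳 n × Word 𝒳 n)) : ℝ :=
  plimsup W fun n xy =>
    Real.logb b ((W n).p xy /
      ((∑ y, (W n).p (xy.1, y)) * (∑ x, (W n).p (x, xy.2)))) / n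

/-- Joint sources `(X^n, Y^n)` whose first marginal is `X^n` and such that
`p-limsup (1/n) δ_n(X^n, Y^n) ≤ D`. -/
def Admissible {𝒳 : Type} [Fintype 𝒳] (X : ∀ n, FinDist (Word 𝒳 n))
    (δ : ∀ n, Word 𝒳 n → Word 𝒳 n → ℝ) (D : ℝ) :
    Set (∀ n, FinDist (Word 𝒳 n × Word 𝒳 n)) :=
  {W | (∀ n x, ∑ y, (W n).p (x, y) = (X n).p x) ∧
       plimsup W (fun n xy => δ n xy.1 xy.2 / n) ≤ D}

/-- The triple `(R, D, S)` is achievable for the source `X` and distortion measures `δ`. -/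
def AchievableTriple {𝒳 : Type} [Fintype 𝒳] (b : ℝ) (X : ∀ n, FinDist (Word 𝒳 n))
    (δ : ∀ n, Word 𝒳 n → Word 𝒳 n → ℝ) (R D S : ℝ) : Prop :=
  ∃ (M : ℕ → ℕ) (f : ∀ n, Word 𝒳 n → Fin (M n)) (g : ∀ n, Fin (M n) → Word 𝒳 n),
    limsup (fun n => Real.logb b (M n) / n) atTop ≤ R ∧
    plimsup X (fun n x => δ n x (g n (f n x)) / n) ≤ D ∧
    limsup (fun n => tvDist ((X n).map fun x => g n (f n x)) (X n)) atTop ≤ S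

/-- The rate-distortion-perception function `R(D,S)`. -/
noncomputable def RDS {𝒳 : Type} [Fintype 𝒳] (b : ℝ) (X : ∀ n, FinDist (Word 𝒳 n))
    (δ : ∀ n, Word 𝒳 n → Word 𝒳 n → ℝ) (D S : ℝ) : ℝ :=
  sInf {R | AchievableTriple b X δ R D S}

/-- Binary entropy function with logarithm to base 2. -/
noncomputable def binH (u : ℝ) : ℝ := -u * Real.logb 2 u - (1 - u) * Real.logb 2 (1 - u)

/-- The Bernoulli(1/2) distribution `P` on `{0,1}`: `P(0) = P(1) = 1/2`. -/
noncomputable def Pber : Bool → ℝ := fun _ => 1 / 2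

/-- The Bernoulli(3/4) distribution `Q` on `{0,1}`: `Q(0) = 1/4`, `Q(1) = 3/4`. -/
noncomputable def Qber : Bool → ℝ := fun x => if x then 3 / 4 else 1 / 4

/-- The Hamming distance as a real-valued distortion function on words. -/
noncomputable def hamδ : ∀ n, Word Bool n → Word Bool n → ℝ :=
  fun _ x y => (hammingDist x y : ℝ)

namespace RDPaux

open Real Finset

variable {Ω : Type} [Fintype Ω]

lemma prob_nonneg (μ : FinDist Ω) (E : Ω → Prop) : 0 ≤ μ.prob E := by
  unfold FinDist.prob
  refine Finset.sum_nonneg fun ω _ => ?_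
  by_cases h : E ω <;> simp [h, μ.nonneg ω]

lemma prob_mono (μ : FinDist Ω) {E F : Ω → Prop} (h : ∀ ω, E ω → F ω) :
    μ.prob E ≤ μ.prob F := by
  refine Finset.sum_le_sum fun ω _ => ?_
  by_cases hE : E ω
  · simp [hE, h ω hE]
  · by_cases hF : F ω <;> simp [hE, hF, μ.nonneg ω]

lemma prob_true (μ : FinDist Ω) {E : Ω → Prop} (h : ∀ ω, E ω) : μ.prob E = 1 := by
  unfold FinDist.prob
  rw [← μ.sum_one]
  exact Finset.sum_congr rfl fun ω _ => by simp [h ω]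

lemma prob_le_one (μ : FinDist Ω) (E : Ω → Prop) : μ.prob E ≤ 1 := by
  rw [← prob_true μ (E := fun _ => True) (fun _ => trivial)]
  exact prob_mono μ fun ω _ => trivial

lemma prob_compl (μ : FinDist Ω) (E : Ω → Prop) :
    μ.prob (fun ω => ¬ E ω) = 1 - μ.prob E := by
  unfold FinDist.prob
  rw [← μ.sum_one, ← Finset.sum_sub_distrib]
  exact Finset.sum_congr rfl fun ω _ => by by_cases h : E ω <;> simp [h]

lemma prob_le_three (μ : FinDist Ω) {E F G H : Ω → Prop}
    (h : ∀ ω, E ω → F ω ∨ G ω ∨ H ω) :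
    μ.prob E ≤ μ.prob F + μ.prob G + μ.prob H := by
  unfold FinDist.prob
  rw [← Finset.sum_add_distrib, ← Finset.sum_add_distrib]
  refine Finset.sum_le_sum fun ω _ => ?_
  have hp := μ.nonneg ω
  by_cases hE : E ω
  · rcases h ω hE with h1 | h1 | h1 <;>
      by_cases hF : F ω <;> by_cases hG : G ω <;> by_cases hH : H ω <;>
        simp_all <;> linarith
  · by_cases hF : F ω <;> by_cases hG : G ω <;> by_cases hH : H ω <;>
      simp_all <;> linarith

/-- Markov-type bound. -/
lemma prob_le_weight (μ : FinDist Ω) {E : Ω → Prop} {f : Ω → ℝ}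
    (hf : ∀ ω, 0 ≤ f ω) (h : ∀ ω, E ω → 1 ≤ f ω) :
    μ.prob E ≤ ∑ ω, μ.p ω * f ω := by
  refine Finset.sum_le_sum fun ω _ => ?_
  by_cases hE : E ω
  · simp only [hE, if_true]
    nlinarith [μ.nonneg ω, h ω hE]
  · simp only [hE, if_false]
    exact mul_nonneg (μ.nonneg ω) (hf ω)

lemma prob_le_sum_ite (μ : FinDist Ω) {E F : Ω → Prop} [DecidablePred F] {g : Ω → ℝ}
    (hg : ∀ ω, 0 ≤ g ω) (h : ∀ ω, E ω → μ.p ω ≤ g ω ∧ F ω) :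
    μ.prob E ≤ ∑ ω, if F ω then g ω else 0 := by
  refine Finset.sum_le_sum fun ω _ => ?_
  by_cases hE : E ω
  · simp [hE, (h ω hE).2, (h ω hE).1]
  · by_cases hF : F ω <;> simp [hE, hF, hg ω]

/-- Factorization of a sum over binary words of a product. -/
lemma sum_word_prod (n : ℕ) (g : Fin n → Bool → ℝ) :
    ∑ y : Word Bool n, ∏ i, g i (y i) = ∏ i, (g i false + g i true) := by
  rw [← Fintype.prod_sum fun i b => g i b]
  exact Finset.prod_congr rfl fun i _ => by rw [Fintype.sum_bool]; ring

lemma prod_ite_hamming (n : ℕ) (x y : Word Bool n) (a b : ℝ) :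
    (∏ i, if x i = y i then a else b)
      = a ^ (n - hammingDist x y) * b ^ (hammingDist x y) := by
  classical
  rw [Finset.prod_ite, Finset.prod_const, Finset.prod_const]
  have h1 : (Finset.univ.filter fun i => ¬ x i = y i).card = hammingDist x y := by
    rw [hammingDist]
  have h2 : (Finset.univ.filter fun i => x i = y i).card = n - hammingDist x y := by
    have := Finset.card_filter_add_card_filter_not
      (s := (Finset.univ : Finset (Fin n))) (p := fun i => x i = y i)
    simp only [Finset.card_univ, Fintype.card_fin] at this
    omega
  rw [h1, h2]

lemma pow_hamming_eq_prod (n : ℕ) (x y : Word Bool n) (s : ℝ) :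
    s ^ (hammingDist x y) = ∏ i, if x i = y i then 1 else s := by
  rw [prod_ite_hamming, one_pow, one_mul]

/-- Sum over the second argument of the kernel times `s^d`. -/
lemma sum_kernel_pow (n : ℕ) (x : Word Bool n) (a b s : ℝ) :
    ∑ y : Word Bool n, (∏ i, if x i = y i then a else b) * s ^ (hammingDist x y)
      = (a + b * s) ^ n := by
  have : ∀ y : Word Bool n,
      (∏ i, if x i = y i then a else b) * s ^ (hammingDist x y)
        = ∏ i, (if x i = y i then a else b * s) := by
    intro y
    rw [pow_hamming_eq_prod n x y s, ← Finset.prod_mul_distrib]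
    exact Finset.prod_congr rfl fun i _ => by by_cases h : x i = y i <;> simp [h]
  simp_rw [this]
  rw [sum_word_prod n (fun i c => if x i = c then a else b * s)]
  have : ∀ i, ((if x i = false then a else b * s) + (if x i = true then a else b * s))
      = a + b * s := fun i => by cases h : x i <;> simp [h] <;> ring
  rw [Finset.prod_congr rfl fun i _ => this i, Finset.prod_const, Finset.card_univ,
    Fintype.card_fin]

/-- Same, summing over the first argument. -/
lemma sum_kernel_pow' (n : ℕ) (y : Word Bool n) (a b s : ℝ) :
    ∑ x : Word Bool n, (∏ i, if x i = y i then a else b) * s ^ (hammingDist x y)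
      = (a + b * s) ^ n := by
  rw [← sum_kernel_pow n y a b s]
  refine Finset.sum_congr rfl fun x _ => ?_
  rw [hammingDist_comm]
  congr 1
  refine Finset.prod_congr rfl fun i _ => ?_
  by_cases h : x i = y i
  · simp [h]
  · rw [if_neg h, if_neg fun hh => h hh.symm]

lemma sum_kernel (n : ℕ) (x : Word Bool n) (a b : ℝ) :
    ∑ y : Word Bool n, (∏ i, if x i = y i then a else b) = (a + b) ^ n := by
  have := sum_kernel_pow n x a b 1
  simpa using this

lemma sum_kernel' (n : ℕ) (y : Word Bool n) (a b : ℝ) :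
    ∑ x : Word Bool n, (∏ i, if x i = y i then a else b) = (a + b) ^ n := by
  have := sum_kernel_pow' n y a b 1
  simpa using this

end RDPaux

namespace RDPaux
open Real Finset

lemma log_one_add_ge {t : ℝ} (ht : 0 < t) : t / (1 + t) ≤ Real.log (1 + t) := by
  have h1 : (0:ℝ) < 1 + t := by linarith
  have h2 := Real.log_le_sub_one_of_pos (x := (1+t)⁻¹) (by positivity)
  rw [Real.log_inv] at h2
  have h3 : -((1+t)⁻¹ - 1) ≤ Real.log (1+t) := by linarith
  calc t/(1+t) = -((1+t)⁻¹ - 1) := by field_simp; ring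
  _ ≤ _ := h3

lemma log_one_sub_ge {c : ℝ} (h0 : 0 < c) (h1 : c < 1) :
    -(c / (1 - c)) ≤ Real.log (1 - c) := by
  have hpos : (0:ℝ) < 1 - c := by linarith
  have h2 := Real.log_le_sub_one_of_pos (x := (1-c)⁻¹) (by positivity)
  rw [Real.log_inv] at h2
  have h3 : (1-c)⁻¹ - 1 = c / (1-c) := by field_simp; ring
  rw [h3] at h2
  linarith

/-- Upper-tail Chernoff base is < 1. -/
lemma theta_up_lt_one {D e : ℝ} (hD0 : 0 ≤ D) (hD1 : D < 1) (he : 0 < e) :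
    (1 + D * e) * (1 + e) ^ (-(D + e)) < 1 := by
  have h1e : (0:ℝ) < 1 + e := by linarith
  have key : 1 + D * e < (1 + e) ^ (D + e) := by
    have e1 : (1 + e) ^ (D + e) = Real.exp (Real.log (1 + e) * (D + e)) :=
      Real.rpow_def_of_pos h1e _
    have e2 : Real.log (1+e) * (D+e) + 1 ≤ Real.exp (Real.log (1+e) * (D+e)) :=
      Real.add_one_le_exp _
    have e3 : e / (1+e) * (D+e) ≤ Real.log (1+e) * (D+e) :=
      mul_le_mul_of_nonneg_right (log_one_add_ge he) (by linarith)
    have e4 : D * e < e / (1+e) * (D+e) := by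
      rw [div_mul_eq_mul_div, lt_div_iff₀ h1e]
      nlinarith [mul_pos (mul_pos he he) (sub_pos.mpr hD1)]
    rw [e1]; linarith
  have hp : (0:ℝ) < (1+e) ^ (D+e) := Real.rpow_pos_of_pos h1e _
  rw [Real.rpow_neg h1e.le, ← div_eq_mul_inv, div_lt_one hp]
  exact key

/-- Lower-tail Chernoff base is < 1. -/
lemma theta_down_lt_one {D c : ℝ} (hc0 : 0 < c) (hcD : c < D) (hD1 : D < 1) :
    (1 - c * D) * (1 - c) ^ (-(D - c)) < 1 := by
  have hc1 : c < 1 := hcD.trans hD1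
  have h1c : (0:ℝ) < 1 - c := by linarith
  have key : 1 - c * D < (1 - c) ^ (D - c) := by
    have e1 : (1 - c) ^ (D - c) = Real.exp (Real.log (1 - c) * (D - c)) :=
      Real.rpow_def_of_pos h1c _
    have e2 := Real.add_one_le_exp (Real.log (1-c) * (D-c))
    have e3 : (-(c/(1-c))) * (D - c) ≤ Real.log (1-c) * (D-c) :=
      mul_le_mul_of_nonneg_right (log_one_sub_ge hc0 hc1) (by linarith)
    have h5 : c*(D-c)/(1-c) < c*D := by
      rw [div_lt_iff₀ h1c]
      nlinarith [mul_pos hc0 (mul_pos hc0 (sub_pos.mpr hD1))]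
    have h6 : (-(c/(1-c))) * (D-c) = -(c*(D-c)/(1-c)) := by ring
    rw [e1]; rw [h6] at e3; linarith
  have hp : (0:ℝ) < (1-c) ^ (D-c) := Real.rpow_pos_of_pos h1c _
  rw [Real.rpow_neg h1c.le, ← div_eq_mul_inv, div_lt_one hp]
  exact key

lemma nat_pow_3_le_2 {w n : ℕ} (h : 5*w ≤ 3*n) : (3:ℕ)^w ≤ 2^n := by
  have h1 : ((3:ℕ)^w)^5 ≤ ((2:ℕ)^n)^5 := by
    calc ((3:ℕ)^w)^5 = 3^(w*5) := (pow_mul 3 w 5).symm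
    _ ≤ 3^(3*n) := Nat.pow_le_pow_right (by norm_num) (by omega)
    _ = 27^n := by rw [pow_mul]; norm_num
    _ ≤ 32^n := Nat.pow_le_pow_left (by norm_num) n
    _ = 2^(5*n) := by rw [pow_mul]; norm_num
    _ = ((2:ℕ)^n)^5 := by rw [Nat.mul_comm]; exact pow_mul 2 n 5
  exact le_of_pow_le_pow_left₀ (by norm_num) (by positivity) h1

lemma three_half_lt_rpow : (3/2 : ℝ) < (2:ℝ) ^ ((3:ℝ)/5) := by
  have h : ((2:ℝ) ^ ((3:ℝ)/5))^(5:ℕ) = 8 := by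
    rw [← Real.rpow_natCast ((2:ℝ) ^ ((3:ℝ)/5)) 5, ← Real.rpow_mul (by norm_num)]
    norm_num
  refine lt_of_pow_lt_pow_left₀ 5 (by positivity) ?_
  rw [h]; norm_num

lemma binH_half : binH (1/2) = 1 := by
  have h : Real.logb 2 (1/2 : ℝ) = -1 := by simp
  rw [binH, show (1:ℝ) - 1/2 = 1/2 by norm_num, h]
  norm_num

lemma binH_continuousAt {u : ℝ} (h0 : 0 < u) (h1 : u < 1) : ContinuousAt binH u := by
  have hu : ContinuousAt Real.log u := Real.continuousAt_log (ne_of_gt h0)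
  have hv : ContinuousAt (fun v : ℝ => Real.log (1 - v)) u :=
    (Real.continuousAt_log (ne_of_gt (by linarith : (0:ℝ) < 1 - u))).comp
      ((continuous_const.sub continuous_id).continuousAt)
  have : ContinuousAt (fun v : ℝ =>
      -v * (Real.log v / Real.log 2) - (1 - v) * (Real.log (1 - v) / Real.log 2)) u := by
    exact ((continuousAt_id.neg.mul (hu.div_const _)).sub
      (((continuous_const.sub continuous_id).continuousAt).mul (hv.div_const _)))
  have hfun : binH = fun v : ℝ =>
      -v * (Real.log v / Real.log 2) - (1 - v) * (Real.log (1 - v) / Real.log 2) := by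
    funext v
    rfl
  rw [hfun]
  exact this

lemma one_le_rpow_of_le_one {r y : ℝ} (hr0 : 0 < r) (hr1 : r ≤ 1) (hy : y ≤ 0) :
    1 ≤ r ^ y := by
  have := Real.rpow_le_rpow_of_exponent_ge hr0 hr1 hy
  simpa using this

lemma hamming_ball_bound (n : ℕ) (y : Word Bool n) (lam : ℝ)
    (h0 : 0 < lam) (h2 : lam ≤ 1/2) :
    ∑ x : Word Bool n, (if (hammingDist x y : ℝ) ≤ n * lam then (1:ℝ) else 0)
      ≤ (2:ℝ) ^ ((n:ℝ) * binH lam) := by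
  have hl1 : lam < 1 := by linarith
  have h1l : (0:ℝ) < 1 - lam := by linarith
  set r : ℝ := lam / (1 - lam) with hrdef
  have hr0 : 0 < r := by positivity
  have hr1 : r ≤ 1 := by rw [div_le_one h1l]; linarith
  have step1 : ∀ x : Word Bool n,
      (if (hammingDist x y : ℝ) ≤ n * lam then (1:ℝ) else 0)
        ≤ r ^ ((hammingDist x y : ℝ) - n * lam) := by
    intro x
    by_cases h : (hammingDist x y : ℝ) ≤ n * lam
    · rw [if_pos h]
      exact one_le_rpow_of_le_one hr0 hr1 (by linarith)
    · rw [if_neg h]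
      positivity
  have step2 : ∑ x : Word Bool n, r ^ ((hammingDist x y : ℝ) - n * lam)
      = r ^ (-((n:ℝ) * lam)) * (1 + r) ^ n := by
    have e1 : ∀ x : Word Bool n, r ^ ((hammingDist x y : ℝ) - n * lam)
        = r ^ (-((n:ℝ)*lam)) * r ^ (hammingDist x y) := by
      intro x
      rw [← Real.rpow_natCast r (hammingDist x y), ← Real.rpow_add hr0]
      congr 1
      ring
    simp_rw [e1]
    rw [← Finset.mul_sum]
    congr 1
    have := sum_kernel_pow' n y 1 1 r
    calc ∑ x : Word Bool n, r ^ hammingDist x y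
        = ∑ x : Word Bool n, (∏ _i : Fin n, (if x _i = y _i then (1:ℝ) else 1))
            * r ^ hammingDist x y := by
          refine Finset.sum_congr rfl fun x _ => ?_
          simp
    _ = (1 + 1 * r) ^ n := this
    _ = (1 + r) ^ n := by ring
  have step3 : r ^ (-((n:ℝ) * lam)) * (1 + r) ^ n = (2:ℝ) ^ ((n:ℝ) * binH lam) := by
    have h1r : (0:ℝ) < 1 + r := by linarith
    have e1 : r ^ (-((n:ℝ)*lam)) = Real.exp (Real.log r * (-((n:ℝ)*lam))) :=
      Real.rpow_def_of_pos hr0 _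
    have e2 : (1+r) ^ n = Real.exp ((n:ℝ) * Real.log (1+r)) := by
      rw [← Real.exp_log (show (0:ℝ) < (1+r)^n by positivity), Real.log_pow]
    have e3 : (2:ℝ) ^ ((n:ℝ) * binH lam) = Real.exp (Real.log 2 * ((n:ℝ) * binH lam)) :=
      Real.rpow_def_of_pos (by norm_num) _
    rw [e1, e2, e3, ← Real.exp_add]
    congr 1
    have hlr : Real.log r = Real.log lam - Real.log (1 - lam) :=
      Real.log_div (ne_of_gt h0) (ne_of_gt h1l)
    have h1req : (1:ℝ) + r = (1 - lam)⁻¹ := by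
      rw [hrdef]
      field_simp; ring
    have hl1r : Real.log (1+r) = -Real.log (1 - lam) := by rw [h1req, Real.log_inv]
    have hlog2 : Real.log 2 ≠ 0 := ne_of_gt (Real.log_pos (by norm_num))
    rw [hlr, hl1r, binH]
    simp only [Real.logb]
    field_simp
    ring
  calc ∑ x : Word Bool n, (if (hammingDist x y : ℝ) ≤ n * lam then (1:ℝ) else 0)
      ≤ ∑ x : Word Bool n, r ^ ((hammingDist x y : ℝ) - n * lam) :=
        Finset.sum_le_sum fun x _ => step1 x
  _ = _ := by rw [step2, step3]

/-- The information density of a joint distribution on pairs of words. -/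
noncomputable def iDen {n : ℕ} (W : FinDist (Word Bool n × Word Bool n))
    (xy : Word Bool n × Word Bool n) : ℝ :=
  Real.logb 2 (W.p xy / ((∑ y, W.p (xy.1, y)) * (∑ x, W.p (x, xy.2)))) / n

lemma p_le_marg_fst {n : ℕ} (W : FinDist (Word Bool n × Word Bool n))
    (xy : Word Bool n × Word Bool n) : W.p xy ≤ ∑ y, W.p (xy.1, y) := by
  have := Finset.single_le_sum (f := fun y => W.p (xy.1, y))
    (fun y _ => W.nonneg _) (Finset.mem_univ xy.2)
  simpa using this

lemma p_le_marg_snd {n : ℕ} (W : FinDist (Word Bool n × Word Bool n))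
    (xy : Word Bool n × Word Bool n) : W.p xy ≤ ∑ x, W.p (x, xy.2) := by
  have := Finset.single_le_sum (f := fun x => W.p (x, xy.2))
    (fun x _ => W.nonneg _) (Finset.mem_univ xy.1)
  simpa using this

lemma sum_marg_fst {n : ℕ} (W : FinDist (Word Bool n × Word Bool n)) :
    ∑ x : Word Bool n, ∑ y : Word Bool n, W.p (x, y) = 1 := by
  rw [← Fintype.sum_prod_type]
  exact W.sum_one

lemma sum_marg_snd {n : ℕ} (W : FinDist (Word Bool n × Word Bool n)) :
    ∑ y : Word Bool n, ∑ x : Word Bool n, W.p (x, y) = 1 := by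
  rw [Finset.sum_comm]
  exact sum_marg_fst W

lemma prob_iden_le_neg {n : ℕ} (hn : 1 ≤ n) (W : FinDist (Word Bool n × Word Bool n))
    {α : ℝ} (hα : α < 0) :
    W.prob (fun xy => ¬ (α < iDen W xy)) ≤ (2:ℝ) ^ (α * n) := by
  have hn' : (0:ℝ) < n := by exact_mod_cast hn
  have key : ∀ xy, ¬ (α < iDen W xy) →
      W.p xy ≤ (2:ℝ)^(α*n) * ((∑ y, W.p (xy.1, y)) * (∑ x, W.p (x, xy.2))) := by
    intro xy hxy
    push_neg at hxy
    set dnm := (∑ y, W.p (xy.1, y)) * (∑ x, W.p (x, xy.2)) with hdnm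
    have hdnm0 : 0 ≤ dnm := mul_nonneg
      (Finset.sum_nonneg fun _ _ => W.nonneg _) (Finset.sum_nonneg fun _ _ => W.nonneg _)
    have hlogb : Real.logb 2 (W.p xy / dnm) ≤ α * n := by
      have := (div_le_iff₀ hn').mp hxy
      linarith [this]
    by_cases hq : W.p xy = 0
    · rw [hq]
      positivity
    have hq0 : 0 < W.p xy := lt_of_le_of_ne (W.nonneg xy) (Ne.symm hq)
    by_cases hd : dnm = 0
    · exfalso
      rw [hd, div_zero, Real.logb_zero] at hlogb
      nlinarith
    have hd0 : 0 < dnm := lt_of_le_of_ne hdnm0 (Ne.symm hd)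
    have hr0 : 0 < W.p xy / dnm := div_pos hq0 hd0
    have := (Real.logb_le_iff_le_rpow (by norm_num) hr0).mp hlogb
    calc W.p xy = (W.p xy / dnm) * dnm := by field_simp
    _ ≤ (2:ℝ)^(α*n) * dnm := mul_le_mul_of_nonneg_right this hdnm0
  have hgnn : ∀ xy : Word Bool n × Word Bool n,
      0 ≤ (2:ℝ)^(α*n) * ((∑ y, W.p (xy.1, y)) * (∑ x, W.p (x, xy.2))) := fun xy =>
    mul_nonneg (Real.rpow_nonneg (by norm_num) _)
      (mul_nonneg (Finset.sum_nonneg fun _ _ => W.nonneg _)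
        (Finset.sum_nonneg fun _ _ => W.nonneg _))
  calc W.prob (fun xy => ¬ (α < iDen W xy))
      ≤ ∑ xy : Word Bool n × Word Bool n, if ¬ (α < iDen W xy) then
          (2:ℝ)^(α*n) * ((∑ y, W.p (xy.1, y)) * (∑ x, W.p (x, xy.2))) else 0 :=
        prob_le_sum_ite W (fun xy => hgnn xy) (fun xy h => ⟨key xy h, h⟩)
  _ ≤ ∑ xy : Word Bool n × Word Bool n,
          (2:ℝ)^(α*n) * ((∑ y, W.p (xy.1, y)) * (∑ x, W.p (x, xy.2))) := by
      refine Finset.sum_le_sum fun xy _ => ?_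
      by_cases h : ¬ (α < iDen W xy)
      · simp [h]
      · simp only [h, if_false]
        exact hgnn xy
  _ = (2:ℝ)^(α*n) := by
      rw [← Finset.mul_sum, Fintype.sum_prod_type]
      have : ∑ x : Word Bool n, ∑ y : Word Bool n,
          (∑ y', W.p (x, y')) * (∑ x', W.p (x', y))
          = (∑ x : Word Bool n, ∑ y', W.p (x, y')) * (∑ y : Word Bool n, ∑ x', W.p (x', y)) := by
        rw [Finset.sum_mul]
        exact Finset.sum_congr rfl fun x _ => by rw [← Finset.mul_sum]
      rw [this, sum_marg_fst, sum_marg_snd]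
      norm_num

lemma rpow_mul_nat (a : ℝ) (α : ℝ) (n : ℕ) : (2:ℝ) ^ (α * n) = ((2:ℝ)^α)^n := by
  rw [← Real.rpow_natCast ((2:ℝ)^α) n, ← Real.rpow_mul (by norm_num : (0:ℝ) ≤ 2)]

lemma iden_tendsto_nonneg (W : ∀ n, FinDist (Word Bool n × Word Bool n)) {α : ℝ}
    (h : Filter.Tendsto (fun n => (W n).prob fun xy => α < iDen (W n) xy)
      Filter.atTop (nhds 0)) : 0 ≤ α := by
  by_contra hneg
  push_neg at hneg
  have hev : ∀ᶠ n in Filter.atTop, 1 - ((2:ℝ)^α)^n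
      ≤ (W n).prob fun xy => α < iDen (W n) xy := by
    refine Filter.eventually_atTop.mpr ⟨1, fun n hn => ?_⟩
    have h1 := prob_iden_le_neg hn (W n) hneg
    have h2 := prob_compl (W n) (fun xy => α < iDen (W n) xy)
    rw [rpow_mul_nat 2 α n] at h1
    linarith
  have h2 : Filter.Tendsto (fun n : ℕ => 1 - ((2:ℝ)^α)^n) Filter.atTop (nhds 1) := by
    have h3 : Filter.Tendsto (fun n : ℕ => ((2:ℝ)^α)^n) Filter.atTop (nhds 0) :=
      tendsto_pow_atTop_nhds_zero_of_lt_one (Real.rpow_nonneg (by norm_num) α)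
        (Real.rpow_lt_one_of_one_lt_of_neg (by norm_num) hneg)
    have := Filter.Tendsto.sub (tendsto_const_nhds (x := (1:ℝ))) h3
    simpa using this
  have := le_of_tendsto_of_tendsto h2 h hev
  linarith

lemma iden_tendsto_three (W : ∀ n, FinDist (Word Bool n × Word Bool n)) :
    Filter.Tendsto (fun n => (W n).prob fun xy => 3 < iDen (W n) xy)
      Filter.atTop (nhds 0) := by
  have key : ∀ n, 1 ≤ n →
      (W n).prob (fun xy => 3 < iDen (W n) xy) ≤ ((1:ℝ)/2)^n := by
    intro n hn
    have hn' : (0:ℝ) < n := by exact_mod_cast hn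
    have hbd : ∀ xy, (3 < iDen (W n) xy) → (W n).p xy ≤ ((1:ℝ)/8)^n := by
      intro xy hxy
      set q := (W n).p xy with hqdef
      set dnm := (∑ y, (W n).p (xy.1, y)) * (∑ x, (W n).p (x, xy.2)) with hdnm
      have hdnm0 : 0 ≤ dnm := mul_nonneg
        (Finset.sum_nonneg fun _ _ => (W n).nonneg _) (Finset.sum_nonneg fun _ _ => (W n).nonneg _)
      have hlogb : 3 * (n:ℝ) < Real.logb 2 (q / dnm) := by
        have := (lt_div_iff₀ hn').mp hxy
        linarith
    -- ratio positive
      have hr0 : 0 < q / dnm := by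
        have hge : 0 ≤ q / dnm := div_nonneg ((W n).nonneg xy) hdnm0
        rcases eq_or_lt_of_le hge with h' | h'
        · exfalso
          rw [← h', Real.logb_zero] at hlogb
          nlinarith
        · exact h'
      have hd0 : 0 < dnm := by
        rcases eq_or_lt_of_le hdnm0 with h | h
        · exfalso; rw [← h, div_zero] at hr0; exact lt_irrefl _ hr0
        · exact h
      have hq0 : 0 < q := by
        have := mul_pos hr0 hd0
        rwa [div_mul_cancel₀ _ (ne_of_gt hd0)] at this
      have hratio : (8:ℝ)^n < q / dnm := by
        have h8 : (2:ℝ) ^ (3*(n:ℝ)) = (8:ℝ)^n := by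
          rw [show (3*(n:ℝ)) = ((3*n : ℕ):ℝ) by push_cast; ring, Real.rpow_natCast,
            pow_mul]
          norm_num
        have := (Real.rpow_lt_rpow_left_iff (x := 2) (by norm_num)).mpr hlogb
        rwa [Real.rpow_logb (by norm_num) (by norm_num) hr0, h8] at this
      have hqq : q * q ≤ dnm := by
        rw [hdnm]
        exact mul_le_mul (p_le_marg_fst (W n) xy) (p_le_marg_snd (W n) xy)
          (le_of_lt hq0) (Finset.sum_nonneg fun _ _ => (W n).nonneg _)
      have h1 : (8:ℝ)^n * dnm < q := by
        have := (lt_div_iff₀ hd0).mp hratio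
        linarith
      have h2 : (8:ℝ)^n * (q * q) < q := lt_of_le_of_lt
        (mul_le_mul_of_nonneg_left hqq (by positivity)) h1
      have h3 : (8:ℝ)^n * q < 1 := by
        have h2' : ((8:ℝ)^n * q) * q < 1 * q := by nlinarith
        exact lt_of_mul_lt_mul_right h2' (le_of_lt hq0)
      rw [div_pow, one_pow, le_div_iff₀ (by positivity : (0:ℝ) < (8:ℝ)^n)]
      nlinarith
    calc (W n).prob (fun xy => 3 < iDen (W n) xy)
        ≤ ∑ xy : Word Bool n × Word Bool n,
            if (3 < iDen (W n) xy) then ((1:ℝ)/8)^n else 0 :=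
          prob_le_sum_ite (W n) (fun xy => by positivity) (fun xy h => ⟨hbd xy h, h⟩)
    _ ≤ ∑ _xy : Word Bool n × Word Bool n, ((1:ℝ)/8)^n := by
          refine Finset.sum_le_sum fun xy _ => ?_
          by_cases h : 3 < iDen (W n) xy <;> simp [h] <;> positivity
    _ = (Fintype.card (Word Bool n × Word Bool n) : ℝ) * ((1:ℝ)/8)^n := by
          rw [Finset.sum_const, Finset.card_univ, nsmul_eq_mul]
    _ ≤ ((1:ℝ)/2)^n := by
          have hc : (Fintype.card (Word Bool n × Word Bool n) : ℝ) = (4:ℝ)^n := by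
            simp [Fintype.card_prod, Fintype.card_fun]
            push_cast
            rw [← mul_pow]
            norm_num
          rw [hc, ← mul_pow]
          apply pow_le_pow_left₀ (by norm_num)
          norm_num
  refine tendsto_of_tendsto_of_tendsto_of_le_of_le' tendsto_const_nhds
    (tendsto_pow_atTop_nhds_zero_of_lt_one (by norm_num : (0:ℝ) ≤ 1/2) (by norm_num))
    (Filter.eventually_atTop.mpr ⟨0, fun n _ => prob_nonneg _ _⟩)
    (Filter.eventually_atTop.mpr ⟨1, fun n hn => key n hn⟩)

/-- The joint distribution given by passing the source through a BSC(D). -/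
noncomputable def bscW (X : ∀ n, FinDist (Word Bool n)) (D : ℝ)
    (hD0 : 0 ≤ D) (hD1 : D ≤ 1) (n : ℕ) : FinDist (Word Bool n × Word Bool n) where
  p := fun xy => (X n).p xy.1 * ∏ i, (if xy.1 i = xy.2 i then 1 - D else D)
  nonneg := fun xy => mul_nonneg ((X n).nonneg _) (Finset.prod_nonneg fun i _ => by
    by_cases h : xy.1 i = xy.2 i <;> simp [h] <;> linarith)
  sum_one := by
    rw [Fintype.sum_prod_type]
    have h1 : ∀ x : Word Bool n,
        ∑ y : Word Bool n, (X n).p x * ∏ i, (if x i = y i then 1-D else D)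
          = (X n).p x := by
      intro x
      rw [← Finset.mul_sum, sum_kernel n x (1-D) D]
      norm_num
    rw [Finset.sum_congr rfl (fun x _ => h1 x)]
    exact (X n).sum_one

variable {X : ∀ n, FinDist (Word Bool n)} {D : ℝ}

lemma bscW_marg (hD0 : 0 ≤ D) (hD1 : D ≤ 1) (n : ℕ) (x : Word Bool n) :
    ∑ y, (bscW X D hD0 hD1 n).p (x, y) = (X n).p x := by
  show ∑ y : Word Bool n, (X n).p x * ∏ i, (if x i = y i then 1-D else D) = (X n).p x
  rw [← Finset.mul_sum, sum_kernel n x (1-D) D]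
  norm_num

/-- Chernoff/Markov bound for the BSC distortion. -/
lemma bsc_markov (hD0 : 0 ≤ D) (hD1 : D ≤ 1) (n : ℕ) (s : ℝ) (hs : 0 < s) (τ : ℝ)
    (E : Word Bool n × Word Bool n → Prop)
    (hE : ∀ xy, E xy → 1 ≤ s ^ ((hammingDist xy.1 xy.2 : ℝ) - n * τ)) :
    (bscW X D hD0 hD1 n).prob E ≤ ((1 - D + D * s) * s ^ (-τ)) ^ n := by
  have step := prob_le_weight (bscW X D hD0 hD1 n)
    (f := fun xy => s ^ ((hammingDist xy.1 xy.2 : ℝ) - n * τ))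
    (fun xy => (Real.rpow_pos_of_pos hs _).le) hE
  have e1 : ∀ xy : Word Bool n × Word Bool n,
      s ^ ((hammingDist xy.1 xy.2 : ℝ) - n * τ)
        = (s ^ (-τ))^n * s ^ (hammingDist xy.1 xy.2) := by
    intro xy
    rw [← Real.rpow_natCast (s ^ (-τ)) n, ← Real.rpow_mul hs.le,
      ← Real.rpow_natCast s (hammingDist xy.1 xy.2), ← Real.rpow_add hs]
    congr 1
    ring
  calc (bscW X D hD0 hD1 n).prob E
      ≤ ∑ xy : Word Bool n × Word Bool n, (bscW X D hD0 hD1 n).p xy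
          * s ^ ((hammingDist xy.1 xy.2 : ℝ) - n * τ) := step
  _ = (s ^ (-τ))^n * ∑ xy : Word Bool n × Word Bool n,
        (bscW X D hD0 hD1 n).p xy * s ^ (hammingDist xy.1 xy.2) := by
      rw [Finset.mul_sum]
      refine Finset.sum_congr rfl fun xy _ => ?_
      rw [e1 xy]
      ring
  _ = (s ^ (-τ))^n * (1 - D + D * s) ^ n := by
      congr 1
      have hp : ∀ xy : Word Bool n × Word Bool n, (bscW X D hD0 hD1 n).p xy
          = (X n).p xy.1 * ∏ i, (if xy.1 i = xy.2 i then 1 - D else D) := fun xy => rfl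
      simp only [hp]
      rw [Fintype.sum_prod_type]
      have h2 : ∀ x : Word Bool n,
          ∑ y : Word Bool n, (X n).p x * (∏ i, (if x i = y i then 1-D else D))
            * s ^ (hammingDist x y) = (X n).p x * (1 - D + D*s)^n := by
        intro x
        have h3 : ∀ y : Word Bool n, (X n).p x * (∏ i, (if x i = y i then 1-D else D))
            * s ^ (hammingDist x y) = (X n).p x * ((∏ i, (if x i = y i then 1-D else D))
            * s ^ (hammingDist x y)) := fun y => by ring
        rw [Finset.sum_congr rfl fun y _ => h3 y, ← Finset.mul_sum,
          sum_kernel_pow n x (1-D) D s]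
      rw [Finset.sum_congr rfl fun x _ => h2 x, ← Finset.sum_mul, (X n).sum_one, one_mul]
  _ = ((1 - D + D * s) * s ^ (-τ)) ^ n := by rw [← mul_pow]; ring_nf

lemma bsc_dist_tendsto (hD0 : 0 < D) (hD : D ≤ 1/2) {ε : ℝ} (hε : 0 < ε) :
    Filter.Tendsto (fun n => (bscW X D hD0.le (by linarith) n).prob
      fun xy => D + ε < hamδ n xy.1 xy.2 / n) Filter.atTop (nhds 0) := by
  set θ : ℝ := (1 - D + D * (1+ε)) * (1+ε) ^ (-(D+ε)) with hθ
  have hθ0 : 0 ≤ θ := by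
    have h1 : (0:ℝ) ≤ 1 - D + D*(1+ε) := by nlinarith
    exact mul_nonneg h1 (Real.rpow_nonneg (by linarith) _)
  have hθ1 : θ < 1 := by
    have := theta_up_lt_one hD0.le (by linarith : D < 1) hε
    calc θ = (1 + D * ε) * (1 + ε) ^ (-(D + ε)) := by rw [hθ]; ring_nf
    _ < 1 := this
  have key : ∀ n : ℕ, (bscW X D hD0.le (by linarith) n).prob
      (fun xy => D + ε < hamδ n xy.1 xy.2 / n) ≤ θ ^ n := by
    intro n
    refine bsc_markov hD0.le (by linarith) n (1+ε) (by linarith) (D+ε) _ ?_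
    intro xy h
    rcases Nat.eq_zero_or_pos n with h0 | hpos
    · exfalso
      subst h0
      rw [show ((0:ℕ):ℝ) = 0 from Nat.cast_zero, div_zero] at h
      linarith
    · have hn' : (0:ℝ) < n := by exact_mod_cast hpos
      have h2 := (lt_div_iff₀ hn').mp h
      have hd : (n:ℝ) * (D+ε) < (hammingDist xy.1 xy.2 : ℝ) := by
        have h3 : hamδ n xy.1 xy.2 = (hammingDist xy.1 xy.2 : ℝ) := rfl
        rw [h3] at h2
        linarith
      exact Real.one_le_rpow (by linarith) (by linarith)
  exact tendsto_of_tendsto_of_tendsto_of_le_of_le' tendsto_const_nhds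
    (tendsto_pow_atTop_nhds_zero_of_lt_one hθ0 hθ1)
    (Filter.Eventually.of_forall fun n => prob_nonneg _ _)
    (Filter.Eventually.of_forall key)

lemma bsc_plimsup_dist (hD0 : 0 < D) (hD : D ≤ 1/2) :
    plimsup (bscW X D hD0.le (by linarith)) (fun n xy => hamδ n xy.1 xy.2 / n) ≤ D := by
  have hBdd : BddBelow {α : ℝ | Filter.Tendsto (fun n =>
      (bscW X D hD0.le (by linarith) n).prob fun xy => α < hamδ n xy.1 xy.2 / n)
      Filter.atTop (nhds 0)} := by
    refine ⟨0, fun β hβ => ?_⟩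
    by_contra hneg
    push_neg at hneg
    have hone : (fun n => (bscW X D hD0.le (by linarith) n).prob
        fun xy => β < hamδ n xy.1 xy.2 / n) = fun _ => (1:ℝ) := by
      funext n
      refine prob_true _ fun xy => ?_
      have : (0:ℝ) ≤ hamδ n xy.1 xy.2 / n := by
        apply div_nonneg (Nat.cast_nonneg _) (Nat.cast_nonneg _)
      linarith
    have hβ' : Filter.Tendsto (fun n => (bscW X D hD0.le (by linarith) n).prob
        fun xy => β < hamδ n xy.1 xy.2 / n) Filter.atTop (nhds 0) := hβ
    rw [hone] at hβ'
    have := tendsto_nhds_unique hβ' tendsto_const_nhds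
    norm_num at this
  rw [plimsup]
  refine le_of_forall_pos_le_add fun ε hε => ?_
  exact csInf_le hBdd (bsc_dist_tendsto hD0 hD hε)

lemma X_ge (hX : ∀ n (x : Word Bool n),
      (X n).p x = (1 / 2) * ∏ i, Pber (x i) + (1 / 2) * ∏ i, Qber (x i))
    (n : ℕ) (x : Word Bool n) : ((1:ℝ)/2)^(n+1) ≤ (X n).p x := by
  rw [hX n x]
  have h1 : ∏ i : Fin n, Pber (x i) = ((1:ℝ)/2)^n := by
    simp [Pber]
  have h2 : 0 ≤ ∏ i : Fin n, Qber (x i) := Finset.prod_nonneg fun i _ => by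
    by_cases h : x i <;> simp [Qber, h] <;> norm_num
  rw [h1, pow_succ]
  nlinarith [pow_nonneg (by norm_num : (0:ℝ) ≤ 1/2) n]

lemma X_pos (hX : ∀ n (x : Word Bool n),
      (X n).p x = (1 / 2) * ∏ i, Pber (x i) + (1 / 2) * ∏ i, Qber (x i))
    (n : ℕ) (x : Word Bool n) : 0 < (X n).p x :=
  lt_of_lt_of_le (by positivity) (X_ge hX n x)

lemma bscW_PY_ge (hX : ∀ n (x : Word Bool n),
      (X n).p x = (1 / 2) * ∏ i, Pber (x i) + (1 / 2) * ∏ i, Qber (x i))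
    (hD0 : 0 ≤ D) (hD1 : D ≤ 1) (n : ℕ) (y : Word Bool n) :
    ((1:ℝ)/2)^(n+1) ≤ ∑ x, (bscW X D hD0 hD1 n).p (x, y) := by
  have hker : ∀ x : Word Bool n, 0 ≤ ∏ i, (if x i = y i then 1-D else D) :=
    fun x => Finset.prod_nonneg fun i _ => by
      by_cases h : x i = y i <;> simp [h] <;> linarith
  have hp : ∀ x : Word Bool n, (bscW X D hD0 hD1 n).p (x, y)
      = (X n).p x * ∏ i, (if x i = y i then 1-D else D) := fun x => rfl
  calc ((1:ℝ)/2)^(n+1)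
      = ∑ x : Word Bool n, ((1:ℝ)/2)^(n+1) * ∏ i, (if x i = y i then 1-D else D) := by
        rw [← Finset.mul_sum, sum_kernel' n y (1-D) D]
        norm_num
  _ ≤ ∑ x : Word Bool n, (X n).p x * ∏ i, (if x i = y i then 1-D else D) :=
        Finset.sum_le_sum fun x _ =>
          mul_le_mul_of_nonneg_right (X_ge hX n x) (hker x)
  _ = ∑ x, (bscW X D hD0 hD1 n).p (x, y) :=
        Finset.sum_congr rfl fun x _ => (hp x).symm

lemma bsc_iden_bound (hX : ∀ n (x : Word Bool n),
      (X n).p x = (1 / 2) * ∏ i, Pber (x i) + (1 / 2) * ∏ i, Qber (x i))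
    (hD0 : 0 < D) (hD : D ≤ 1/2) {n : ℕ} (hn : 1 ≤ n) (xy : Word Bool n × Word Bool n) :
    iDen (bscW X D hD0.le (by linarith) n) xy ≤
      (((n:ℝ) - hammingDist xy.1 xy.2) * Real.logb 2 (1-D)
        + (hammingDist xy.1 xy.2) * Real.logb 2 D + ((n:ℝ)+1)) / n := by
  have hn' : (0:ℝ) < n := by exact_mod_cast hn
  have hD1 : D < 1 := by linarith
  set d := hammingDist xy.1 xy.2 with hd
  set ker : ℝ := ∏ i, (if xy.1 i = xy.2 i then 1-D else D) with hkerdef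
  set PY : ℝ := ∑ x, (bscW X D hD0.le (by linarith) n).p (x, xy.2) with hPYdef
  have hker_pos : 0 < ker := Finset.prod_pos fun i _ => by
    by_cases h : xy.1 i = xy.2 i <;> simp [h] <;> linarith
  have hPY_pos : 0 < PY :=
    lt_of_lt_of_le (by positivity) (bscW_PY_ge hX hD0.le (by linarith) n xy.2)
  have hdn : d ≤ n := by
    have := hammingDist_le_card_fintype (x := xy.1) (y := xy.2)
    simpa using this
  rw [iDen]
  rw [div_le_div_iff₀ hn' hn']
  apply mul_le_mul_of_nonneg_right _ hn'.le
  have hmargf : (∑ y, (bscW X D hD0.le (by linarith) n).p (xy.1, y)) = (X n).p xy.1 :=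
    bscW_marg _ _ n xy.1
  have hpxy : (bscW X D hD0.le (by linarith) n).p xy = (X n).p xy.1 * ker := rfl
  rw [hmargf, hpxy]
  rw [mul_div_mul_left _ _ (ne_of_gt (X_pos hX n xy.1))]
  rw [Real.logb_div (ne_of_gt hker_pos) (ne_of_gt hPY_pos)]
  have hker_eq : ker = (1-D)^(n - d) * D^d := prod_ite_hamming n xy.1 xy.2 (1-D) D
  have hlogker : Real.logb 2 ker = ((n:ℝ) - d) * Real.logb 2 (1-D) + d * Real.logb 2 D := by
    rw [hker_eq, Real.logb_mul (pow_ne_zero _ (by linarith)) (pow_ne_zero _ (ne_of_gt hD0)),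
      Real.logb_pow, Real.logb_pow, Nat.cast_sub hdn]
  have hlogPY : -((n:ℝ)+1) ≤ Real.logb 2 PY := by
    have h1 : Real.logb 2 (((1:ℝ)/2)^(n+1)) ≤ Real.logb 2 PY :=
      (Real.logb_le_logb (by norm_num) (by positivity) hPY_pos).mpr
        (bscW_PY_ge hX hD0.le (by linarith) n xy.2)
    have h2 : Real.logb 2 (((1:ℝ)/2)^(n+1)) = -((n:ℝ)+1) := by
      rw [Real.logb_pow]
      have : Real.logb 2 ((1:ℝ)/2) = -1 := by simp
      rw [this]
      push_cast
      ring
    linarith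
  rw [hlogker]
  linarith

lemma bsc_iden_tendsto (hX : ∀ n (x : Word Bool n),
      (X n).p x = (1 / 2) * ∏ i, Pber (x i) + (1 / 2) * ∏ i, Qber (x i))
    (hD0 : 0 < D) (hD : D ≤ 1/2) {ε : ℝ} (hε : 0 < ε) :
    Filter.Tendsto (fun n => (bscW X D hD0.le (by linarith) n).prob
      fun xy => 1 - binH D + ε < iDen (bscW X D hD0.le (by linarith) n) xy)
      Filter.atTop (nhds 0) := by
  have hD1 : D < 1 := by linarith
  set L := Real.logb 2 (1-D) - Real.logb 2 D with hL
  have hL0 : 0 ≤ L := by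
    have h := (Real.logb_le_logb (b := 2) (by norm_num) hD0 (by linarith : (0:ℝ) < 1 - D)).mpr
      (by linarith : D ≤ 1 - D)
    rw [hL]; linarith
  set c := min (D/2) (ε/(3*(L+1))) with hc
  have hc0 : 0 < c := lt_min (by linarith) (by positivity)
  have hcD : c < D := lt_of_le_of_lt (min_le_left _ _) (by linarith)
  have hc1 : c < 1 := by linarith
  have hcL : c * L ≤ ε/3 := by
    have h1 : c ≤ ε/(3*(L+1)) := min_le_right _ _
    have h2 : c * L ≤ (ε/(3*(L+1))) * L := mul_le_mul_of_nonneg_right h1 hL0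
    have h3 : (ε/(3*(L+1))) * L ≤ ε/3 := by
      rw [div_mul_eq_mul_div, div_le_div_iff₀ (by positivity) (by norm_num)]
      nlinarith
    linarith
  set θ : ℝ := (1 - D + D * (1-c)) * (1-c) ^ (-(D-c)) with hθdef
  have hθ1 : θ < 1 := by
    have h := theta_down_lt_one hc0 hcD hD1
    have : θ = (1 - c*D) * (1-c)^(-(D-c)) := by
      rw [hθdef]
      congr 1
      ring
    rw [this]
    exact h
  have hθ0 : 0 ≤ θ := by
    have h1 : (0:ℝ) ≤ 1 - D + D*(1-c) := by nlinarith
    exact mul_nonneg h1 (Real.rpow_nonneg (by linarith) _)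
  have key : ∀ n : ℕ, 1 ≤ n → (3/ε : ℝ) ≤ n →
      (bscW X D hD0.le (by linarith) n).prob
        (fun xy => 1 - binH D + ε < iDen (bscW X D hD0.le (by linarith) n) xy) ≤ θ ^ n := by
    intro n hn1 hn3
    have hn' : (0:ℝ) < n := by exact_mod_cast hn1
    have hεn : 1 ≤ (n:ℝ) * (ε/3) := by
      have : 3 ≤ (n:ℝ) * ε := by
        have := (div_le_iff₀ hε).mp hn3
        linarith
      linarith
    refine bsc_markov hD0.le (by linarith) n (1-c) (by linarith) (D-c) _ ?_
    intro xy hev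
    have hd_le : (hammingDist xy.1 xy.2 : ℝ) ≤ n * (D-c) := by
      by_contra hcon
      push_neg at hcon
      have hbd := bsc_iden_bound hX hD0 hD hn1 xy
      set dd := (hammingDist xy.1 xy.2 : ℝ) with hdd
      have e1 : ((n:ℝ) - dd) * Real.logb 2 (1-D) + dd * Real.logb 2 D
          = (n:ℝ) * ((1-D) * Real.logb 2 (1-D) + D * Real.logb 2 D)
            + ((n:ℝ)*D - dd) * L := by
        rw [hL]; ring
      have e2 : ((n:ℝ)*D - dd) * L ≤ ((n:ℝ)*D - (n:ℝ)*(D-c)) * L := by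
        apply mul_le_mul_of_nonneg_right _ hL0
        linarith
      have e3 : ((n:ℝ)*D - (n:ℝ)*(D-c)) * L = (n:ℝ) * (c * L) := by ring
      have e4 : (1-D) * Real.logb 2 (1-D) + D * Real.logb 2 D = - binH D := by
        rw [binH]; ring
      have hnum : ((n:ℝ) - dd) * Real.logb 2 (1-D) + dd * Real.logb 2 D + ((n:ℝ)+1)
          ≤ (n:ℝ) * (1 - binH D + ε/3 + ε/3) := by
        rw [e1, e4]
        have h5 : (n:ℝ) * (c*L) ≤ (n:ℝ) * (ε/3) :=
          mul_le_mul_of_nonneg_left hcL hn'.le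
        nlinarith [e2, e3]
      have hfin : iDen (bscW X D hD0.le (by linarith) n) xy
          ≤ 1 - binH D + ε/3 + ε/3 := by
        have h6 : (((n:ℝ) - dd) * Real.logb 2 (1-D) + dd * Real.logb 2 D + ((n:ℝ)+1)) / n
            ≤ ((n:ℝ) * (1 - binH D + ε/3 + ε/3)) / n := by
          apply div_le_div_of_nonneg_right hnum hn'.le
        have h7 : ((n:ℝ) * (1 - binH D + ε/3 + ε/3)) / n = 1 - binH D + ε/3 + ε/3 := by
          field_simp
        rw [h7] at h6
        exact le_trans hbd h6
      linarith
    exact one_le_rpow_of_le_one (by linarith) (by linarith) (by linarith)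
  refine tendsto_of_tendsto_of_tendsto_of_le_of_le' tendsto_const_nhds
    (tendsto_pow_atTop_nhds_zero_of_lt_one hθ0 hθ1)
    (Filter.Eventually.of_forall fun n => prob_nonneg _ _) ?_
  refine Filter.eventually_atTop.mpr ⟨max 1 (Nat.ceil (3/ε)), fun n hn => key n ?_ ?_⟩
  · exact le_trans (le_max_left _ _) hn
  · have h1 : Nat.ceil (3/ε) ≤ n := le_trans (le_max_right _ _) hn
    calc (3/ε : ℝ) ≤ (Nat.ceil ((3:ℝ)/ε) : ℝ) := Nat.le_ceil _
    _ ≤ n := by exact_mod_cast h1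

lemma bsc_Ibar_le (hX : ∀ n (x : Word Bool n),
      (X n).p x = (1 / 2) * ∏ i, Pber (x i) + (1 / 2) * ∏ i, Qber (x i))
    (hD0 : 0 < D) (hD : D ≤ 1/2) :
    Ibar 2 (bscW X D hD0.le (by linarith)) ≤ 1 - binH D := by
  rw [Ibar, plimsup]
  have hBdd : BddBelow {α : ℝ | Filter.Tendsto (fun n =>
      (bscW X D hD0.le (by linarith) n).prob fun xy =>
        α < Real.logb 2 ((bscW X D hD0.le (by linarith) n).p xy /
          ((∑ y, (bscW X D hD0.le (by linarith) n).p (xy.1, y)) *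
           (∑ x, (bscW X D hD0.le (by linarith) n).p (x, xy.2)))) / n)
      Filter.atTop (nhds 0)} :=
    ⟨0, fun β hβ => iden_tendsto_nonneg _ hβ⟩
  refine le_of_forall_pos_le_add fun ε hε => csInf_le hBdd ?_
  exact bsc_iden_tendsto hX hD0 hD hε

lemma prob_zero {Ω : Type} [Fintype Ω] (μ : FinDist Ω) {E : Ω → Prop}
    (h : ∀ ω, ¬ E ω) : μ.prob E = 0 := by
  unfold FinDist.prob
  refine Finset.sum_eq_zero fun ω _ => by simp [h ω]

lemma probC_ge (hX : ∀ n (x : Word Bool n),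
      (X n).p x = (1 / 2) * ∏ i, Pber (x i) + (1 / 2) * ∏ i, Qber (x i))
    (n : ℕ) (W' : FinDist (Word Bool n × Word Bool n))
    (hmarg' : ∀ x, ∑ y, W'.p (x, y) = (X n).p x) :
    1/2 - (1/2) * (((3:ℝ)/2) * (2:ℝ)^(-(3:ℝ)/5))^n
      ≤ W'.prob (fun xy => (X n).p xy.1 ≤ (1/2:ℝ)^n) := by
  classical
  set z : Word Bool n := fun _ => false with hz
  -- step a: prob in terms of the first marginal
  have ha : W'.prob (fun xy => (X n).p xy.1 ≤ (1/2:ℝ)^n)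
      = ∑ x : Word Bool n, (if (X n).p x ≤ (1/2:ℝ)^n then (X n).p x else 0) := by
    unfold FinDist.prob
    rw [Fintype.sum_prod_type]
    refine Finset.sum_congr rfl fun x _ => ?_
    by_cases h : (X n).p x ≤ (1/2:ℝ)^n
    · simp only [h, if_true]
      exact hmarg' x
    · rw [if_neg h]
      simp only [if_neg h]
      exact Finset.sum_const_zero
  -- Q-product formula
  have hQprod : ∀ x : Word Bool n, ∏ i, Qber (x i)
      = ((1:ℝ)/4)^(n - hammingDist x z) * ((3:ℝ)/4)^(hammingDist x z) := by
    intro x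
    rw [← prod_ite_hamming n x z ((1:ℝ)/4) ((3:ℝ)/4)]
    refine Finset.prod_congr rfl fun i _ => ?_
    cases h : x i <;> simp [Qber, h, hz]
  -- low-weight words have small probability
  have hCw : ∀ x : Word Bool n, 5 * (hammingDist x z) ≤ 3 * n →
      (X n).p x ≤ (1/2:ℝ)^n := by
    intro x hw
    have hwn : hammingDist x z ≤ n := by
      simpa using hammingDist_le_card_fintype (x := x) (y := z)
    rw [hX n x]
    have hP : ∏ i : Fin n, Pber (x i) = ((1:ℝ)/2)^n := by simp [Pber]
    have hQ : ∏ i : Fin n, Qber (x i) ≤ ((1:ℝ)/2)^n := by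
      rw [hQprod x]
      set w := hammingDist x z with hwdef
      have h3 : (3:ℝ)^w ≤ (2:ℝ)^n := by exact_mod_cast nat_pow_3_le_2 hw
      have h5 : ((3:ℝ)/4)^w = 3^w * ((1:ℝ)/4)^w := by rw [← mul_pow]; norm_num
      have h4 : ((1:ℝ)/4)^(n-w) * ((1:ℝ)/4)^w = ((1:ℝ)/4)^n := by
        rw [← pow_add, Nat.sub_add_cancel hwn]
      have e : ((1:ℝ)/4)^(n-w) * ((3:ℝ)/4)^w = 3^w * ((1:ℝ)/4)^n := by
        calc ((1:ℝ)/4)^(n-w) * ((3:ℝ)/4)^w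
            = 3^w * (((1:ℝ)/4)^(n-w) * ((1:ℝ)/4)^w) := by rw [h5]; ring
        _ = 3^w * ((1:ℝ)/4)^n := by rw [h4]
      rw [e]
      calc (3:ℝ)^w * ((1:ℝ)/4)^n ≤ (2:ℝ)^n * ((1:ℝ)/4)^n :=
            mul_le_mul_of_nonneg_right h3 (by positivity)
      _ = ((1:ℝ)/2)^n := by rw [← mul_pow]; norm_num
    rw [hP]
    have hfin : (1/2 : ℝ) * ((1:ℝ)/2)^n + (1/2) * ∏ i : Fin n, Qber (x i)
        ≤ (1/2) * ((1:ℝ)/2)^n + (1/2) * ((1:ℝ)/2)^n := by linarith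
    calc (1/2 : ℝ) * ((1:ℝ)/2)^n + (1/2) * ∏ i : Fin n, Qber (x i)
        ≤ (1/2) * ((1:ℝ)/2)^n + (1/2) * ((1:ℝ)/2)^n := hfin
    _ = ((1:ℝ)/2)^n := by ring
  -- counting bound
  set T : ℝ := ∑ x : Word Bool n, (if ¬ (5 * hammingDist x z ≤ 3 * n) then (1:ℝ) else 0)
    with hT
  have hT0 : T ≤ ((2:ℝ)^(-(3:ℝ)/5))^n * 3^n := by
    have hstep : ∀ x : Word Bool n, (if ¬ (5 * hammingDist x z ≤ 3 * n) then (1:ℝ) else 0)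
        ≤ (2:ℝ)^((hammingDist x z : ℝ) - 3*n/5) := by
      intro x
      by_cases h : 5 * hammingDist x z ≤ 3 * n
      · rw [if_neg (by simpa using h)]
        positivity
      · rw [if_pos (by simpa using h)]
        refine Real.one_le_rpow (by norm_num) ?_
        push_neg at h
        have : (3*n : ℝ) < 5 * (hammingDist x z : ℝ) := by exact_mod_cast h
        linarith
    have hsum : ∑ x : Word Bool n, (2:ℝ)^((hammingDist x z : ℝ) - 3*n/5)
        = ((2:ℝ)^(-(3:ℝ)/5))^n * 3^n := by
      have e1 : ∀ x : Word Bool n, (2:ℝ)^((hammingDist x z : ℝ) - 3*n/5)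
          = (2:ℝ)^(-(3:ℝ)/5*n) * 2^(hammingDist x z) := by
        intro x
        rw [← Real.rpow_natCast 2 (hammingDist x z), ← Real.rpow_add (by norm_num)]
        congr 1
        ring
      rw [Finset.sum_congr rfl fun x _ => e1 x, ← Finset.mul_sum]
      have e2 : ∑ x : Word Bool n, (2:ℝ)^(hammingDist x z) = 3^n := by
        calc ∑ x : Word Bool n, (2:ℝ)^(hammingDist x z)
            = ∑ x : Word Bool n,
                (∏ i : Fin n, if x i = z i then (1:ℝ) else 1) * 2 ^ hammingDist x z := by
              refine Finset.sum_congr rfl fun x _ => ?_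
              simp
        _ = ((1:ℝ) + 1 * 2) ^ n := sum_kernel_pow' n z 1 1 2
        _ = 3^n := by norm_num
      rw [e2]
      congr 1
      rw [← Real.rpow_natCast ((2:ℝ)^(-(3:ℝ)/5)) n, ← Real.rpow_mul (by norm_num)]
    calc T ≤ ∑ x : Word Bool n, (2:ℝ)^((hammingDist x z : ℝ) - 3*n/5) :=
          Finset.sum_le_sum fun x _ => hstep x
    _ = _ := hsum
  -- main chain
  rw [ha]
  have hchain1 : ∑ x : Word Bool n, (if 5 * hammingDist x z ≤ 3 * n
      then ((1:ℝ)/2)^(n+1) else 0)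
      ≤ ∑ x : Word Bool n, (if (X n).p x ≤ (1/2:ℝ)^n then (X n).p x else 0) := by
    refine Finset.sum_le_sum fun x _ => ?_
    by_cases h : 5 * hammingDist x z ≤ 3 * n
    · rw [if_pos h, if_pos (hCw x h)]
      exact X_ge hX n x
    · rw [if_neg h]
      by_cases h2 : (X n).p x ≤ (1/2:ℝ)^n
      · rw [if_pos h2]; exact (X n).nonneg x
      · rw [if_neg h2]
  have hchain2 : ((1:ℝ)/2)^(n+1) * ((2:ℝ)^n - T)
      = ∑ x : Word Bool n, (if 5 * hammingDist x z ≤ 3 * n then ((1:ℝ)/2)^(n+1) else 0) := by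
    have e1 : ∀ x : Word Bool n, (if 5 * hammingDist x z ≤ 3 * n then ((1:ℝ)/2)^(n+1) else 0)
        = ((1:ℝ)/2)^(n+1) * (1 - (if ¬ (5 * hammingDist x z ≤ 3 * n) then (1:ℝ) else 0)) := by
      intro x
      by_cases h : 5 * hammingDist x z ≤ 3 * n <;> simp [h]
    rw [Finset.sum_congr rfl fun x _ => e1 x, ← Finset.mul_sum]
    congr 1
    rw [Finset.sum_sub_distrib, hT]
    congr 1
    rw [Finset.sum_const, Finset.card_univ, nsmul_eq_mul]
    have : (Fintype.card (Word Bool n) : ℝ) = (2:ℝ)^n := by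
      simp [Fintype.card_fun]
    rw [this]
    norm_num
  have hfinal : 1/2 - (1/2) * (((3:ℝ)/2) * (2:ℝ)^(-(3:ℝ)/5))^n
      ≤ ((1:ℝ)/2)^(n+1) * ((2:ℝ)^n - T) := by
    have h1 : ((1:ℝ)/2)^(n+1) * ((2:ℝ)^n - T)
        ≥ ((1:ℝ)/2)^(n+1) * ((2:ℝ)^n - ((2:ℝ)^(-(3:ℝ)/5))^n * 3^n) := by
      apply mul_le_mul_of_nonneg_left _ (by positivity)
      linarith
    have h2 : ((1:ℝ)/2)^(n+1) * ((2:ℝ)^n - ((2:ℝ)^(-(3:ℝ)/5))^n * 3^n)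
        = 1/2 - (1/2) * (((3:ℝ)/2) * (2:ℝ)^(-(3:ℝ)/5))^n := by
      have e1 : ((1:ℝ)/2)^(n+1) * (2:ℝ)^n = 1/2 := by
        rw [pow_succ]
        have : ((1:ℝ)/2)^n * (2:ℝ)^n = 1 := by rw [← mul_pow]; norm_num
        calc ((1:ℝ)/2)^n * (1/2) * (2:ℝ)^n = (((1:ℝ)/2)^n * (2:ℝ)^n) * (1/2) := by ring
        _ = 1/2 := by rw [this]; norm_num
      have e2 : ((1:ℝ)/2)^(n+1) * (((2:ℝ)^(-(3:ℝ)/5))^n * 3^n)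
          = (1/2) * (((3:ℝ)/2) * (2:ℝ)^(-(3:ℝ)/5))^n := by
        rw [pow_succ, mul_pow]
        have : ((1:ℝ)/2)^n * (((2:ℝ)^(-(3:ℝ)/5))^n * 3^n)
            = (((3:ℝ)/2)^n * ((2:ℝ)^(-(3:ℝ)/5))^n) := by
          rw [← mul_pow, ← mul_pow]
          congr 1
          ring
        calc ((1:ℝ)/2)^n * (1/2) * (((2:ℝ)^(-(3:ℝ)/5))^n * 3^n)
            = (((1:ℝ)/2)^n * (((2:ℝ)^(-(3:ℝ)/5))^n * 3^n)) * (1/2) := by ring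
        _ = (((3:ℝ)/2)^n * ((2:ℝ)^(-(3:ℝ)/5))^n) * (1/2) := by rw [this]
        _ = _ := by ring
      rw [mul_sub, e1, e2]
    linarith [h1, h2]
  calc 1/2 - (1/2) * (((3:ℝ)/2) * (2:ℝ)^(-(3:ℝ)/5))^n
      ≤ ((1:ℝ)/2)^(n+1) * ((2:ℝ)^n - T) := hfinal
  _ = ∑ x : Word Bool n, (if 5 * hammingDist x z ≤ 3 * n then ((1:ℝ)/2)^(n+1) else 0) :=
      hchain2
  _ ≤ _ := hchain1

lemma converse_upper (n : ℕ) (hn : 1 ≤ n) (W' : FinDist (Word Bool n × Word Bool n))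
    (hmarg' : ∀ x, ∑ y, W'.p (x, y) = (X n).p x)
    {α lam : ℝ} (hα0 : 0 ≤ α) (hlam0 : 0 < lam) (hlam2 : lam ≤ 1/2) :
    W'.prob (fun xy => (¬ (α < iDen W' xy)) ∧ ((hammingDist xy.1 xy.2 : ℝ) ≤ n * lam)
      ∧ ((X n).p xy.1 ≤ (1/2:ℝ)^n))
      ≤ ((2:ℝ)^(α - 1 + binH lam))^n := by
  classical
  have hn' : (0:ℝ) < n := by exact_mod_cast hn
  set PY : Word Bool n → ℝ := fun y => ∑ x, W'.p (x, y) with hPYdef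
  have hPY0 : ∀ y, 0 ≤ PY y := fun y => Finset.sum_nonneg fun _ _ => W'.nonneg _
  have hgnn : ∀ xy : Word Bool n × Word Bool n,
      0 ≤ (2:ℝ)^((n:ℝ)*α) * ((X n).p xy.1 * PY xy.2) := fun xy =>
    mul_nonneg (Real.rpow_nonneg (by norm_num) _)
      (mul_nonneg ((X n).nonneg _) (hPY0 _))
  have hkey : ∀ xy : Word Bool n × Word Bool n, (¬ (α < iDen W' xy)) →
      W'.p xy ≤ (2:ℝ)^((n:ℝ)*α) * ((X n).p xy.1 * PY xy.2) := by
    intro xy h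
    push_neg at h
    have hxid : iDen W' xy = Real.logb 2 (W'.p xy / ((X n).p xy.1 * PY xy.2)) / n := by
      rw [iDen, hmarg' xy.1]
    rw [hxid] at h
    set dnm := (X n).p xy.1 * PY xy.2 with hdnm
    have hdnm0 : 0 ≤ dnm := mul_nonneg ((X n).nonneg _) (hPY0 _)
    have hlogb : Real.logb 2 (W'.p xy / dnm) ≤ α * n := by
      have := (div_le_iff₀ hn').mp h
      linarith
    by_cases hq : W'.p xy = 0
    · rw [hq]
      exact hgnn xy
    have hq0 : 0 < W'.p xy := lt_of_le_of_ne (W'.nonneg xy) (Ne.symm hq)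
    by_cases hd : dnm = 0
    · exfalso
      rcases mul_eq_zero.mp hd with h1 | h1
      · have := p_le_marg_fst W' xy
        rw [hmarg' xy.1] at this
        nlinarith
      · have := p_le_marg_snd W' xy
        rw [show (∑ x, W'.p (x, xy.2)) = PY xy.2 from rfl] at this
        nlinarith
    have hd0 : 0 < dnm := lt_of_le_of_ne hdnm0 (Ne.symm hd)
    have hr0 : 0 < W'.p xy / dnm := div_pos hq0 hd0
    have hle := (Real.logb_le_iff_le_rpow (by norm_num) hr0).mp hlogb
    have : W'.p xy ≤ (2:ℝ)^(α * (n:ℝ)) * dnm := by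
      calc W'.p xy = (W'.p xy / dnm) * dnm := by field_simp
      _ ≤ (2:ℝ)^(α*(n:ℝ)) * dnm := mul_le_mul_of_nonneg_right hle hdnm0
    rw [show (n:ℝ)*α = α*(n:ℝ) by ring]
    exact this
  have step1 : W'.prob (fun xy => (¬ (α < iDen W' xy))
      ∧ ((hammingDist xy.1 xy.2 : ℝ) ≤ n * lam) ∧ ((X n).p xy.1 ≤ (1/2:ℝ)^n))
      ≤ ∑ xy : Word Bool n × Word Bool n,
        if (((hammingDist xy.1 xy.2 : ℝ) ≤ n * lam) ∧ ((X n).p xy.1 ≤ (1/2:ℝ)^n))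
        then (2:ℝ)^((n:ℝ)*α) * ((X n).p xy.1 * PY xy.2) else 0 :=
    prob_le_sum_ite W' (fun xy => hgnn xy)
      (fun xy h => ⟨hkey xy h.1, h.2.1, h.2.2⟩)
  have step2 : ∑ xy : Word Bool n × Word Bool n,
      (if (((hammingDist xy.1 xy.2 : ℝ) ≤ n * lam) ∧ ((X n).p xy.1 ≤ (1/2:ℝ)^n))
      then (2:ℝ)^((n:ℝ)*α) * ((X n).p xy.1 * PY xy.2) else 0)
      ≤ (2:ℝ)^((n:ℝ)*α) * ((1:ℝ)/2)^n * (2:ℝ)^((n:ℝ) * binH lam) := by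
    rw [Fintype.sum_prod_type, Finset.sum_comm]
    have inner : ∀ y : Word Bool n,
        ∑ x : Word Bool n,
          (if (((hammingDist x y : ℝ) ≤ n * lam) ∧ ((X n).p x ≤ (1/2:ℝ)^n))
          then (2:ℝ)^((n:ℝ)*α) * ((X n).p x * PY y) else 0)
        ≤ (2:ℝ)^((n:ℝ)*α) * ((1:ℝ)/2)^n * PY y * (2:ℝ)^((n:ℝ) * binH lam) := by
      intro y
      have hpt : ∀ x : Word Bool n,
          (if (((hammingDist x y : ℝ) ≤ n * lam) ∧ ((X n).p x ≤ (1/2:ℝ)^n))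
          then (2:ℝ)^((n:ℝ)*α) * ((X n).p x * PY y) else 0)
          ≤ (2:ℝ)^((n:ℝ)*α) * ((1:ℝ)/2)^n * PY y
              * (if (hammingDist x y : ℝ) ≤ n * lam then (1:ℝ) else 0) := by
        intro x
        by_cases h : (((hammingDist x y : ℝ) ≤ n * lam) ∧ ((X n).p x ≤ (1/2:ℝ)^n))
        · rw [if_pos h, if_pos h.1]
          have := h.2
          have h2 : (2:ℝ)^((n:ℝ)*α) * ((X n).p x * PY y)
              ≤ (2:ℝ)^((n:ℝ)*α) * (((1:ℝ)/2)^n * PY y) := by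
            apply mul_le_mul_of_nonneg_left _ (Real.rpow_nonneg (by norm_num) _)
            exact mul_le_mul_of_nonneg_right this (hPY0 y)
          calc (2:ℝ)^((n:ℝ)*α) * ((X n).p x * PY y)
              ≤ (2:ℝ)^((n:ℝ)*α) * (((1:ℝ)/2)^n * PY y) := h2
          _ = (2:ℝ)^((n:ℝ)*α) * ((1:ℝ)/2)^n * PY y * 1 := by ring
        · rw [if_neg h]
          by_cases h1 : (hammingDist x y : ℝ) ≤ n * lam
          · rw [if_pos h1]
            have : (0:ℝ) ≤ (2:ℝ)^((n:ℝ)*α) * ((1:ℝ)/2)^n * PY y :=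
              mul_nonneg (mul_nonneg (Real.rpow_nonneg (by norm_num) _) (by positivity))
                (hPY0 y)
            linarith
          · rw [if_neg h1]
            norm_num
      calc ∑ x : Word Bool n,
          (if (((hammingDist x y : ℝ) ≤ n * lam) ∧ ((X n).p x ≤ (1/2:ℝ)^n))
          then (2:ℝ)^((n:ℝ)*α) * ((X n).p x * PY y) else 0)
          ≤ ∑ x : Word Bool n, (2:ℝ)^((n:ℝ)*α) * ((1:ℝ)/2)^n * PY y
              * (if (hammingDist x y : ℝ) ≤ n * lam then (1:ℝ) else 0) :=
            Finset.sum_le_sum fun x _ => hpt x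
      _ = (2:ℝ)^((n:ℝ)*α) * ((1:ℝ)/2)^n * PY y
            * ∑ x : Word Bool n, (if (hammingDist x y : ℝ) ≤ n * lam then (1:ℝ) else 0) := by
            rw [← Finset.mul_sum]
      _ ≤ (2:ℝ)^((n:ℝ)*α) * ((1:ℝ)/2)^n * PY y * (2:ℝ)^((n:ℝ) * binH lam) := by
            apply mul_le_mul_of_nonneg_left (hamming_ball_bound n y lam hlam0 hlam2)
            exact mul_nonneg (mul_nonneg (Real.rpow_nonneg (by norm_num) _) (by positivity))
              (hPY0 y)
    calc ∑ y : Word Bool n, ∑ x : Word Bool n,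
        (if (((hammingDist x y : ℝ) ≤ n * lam) ∧ ((X n).p x ≤ (1/2:ℝ)^n))
        then (2:ℝ)^((n:ℝ)*α) * ((X n).p x * PY y) else 0)
        ≤ ∑ y : Word Bool n,
            (2:ℝ)^((n:ℝ)*α) * ((1:ℝ)/2)^n * PY y * (2:ℝ)^((n:ℝ) * binH lam) :=
          Finset.sum_le_sum fun y _ => inner y
    _ = (2:ℝ)^((n:ℝ)*α) * ((1:ℝ)/2)^n * (2:ℝ)^((n:ℝ) * binH lam) * ∑ y, PY y := by
          rw [Finset.mul_sum]
          refine Finset.sum_congr rfl fun y _ => by ring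
    _ = (2:ℝ)^((n:ℝ)*α) * ((1:ℝ)/2)^n * (2:ℝ)^((n:ℝ) * binH lam) := by
          have : ∑ y, PY y = 1 := sum_marg_snd W'
          rw [this, mul_one]
  have step3 : (2:ℝ)^((n:ℝ)*α) * ((1:ℝ)/2)^n * (2:ℝ)^((n:ℝ) * binH lam)
      = ((2:ℝ)^(α - 1 + binH lam))^n := by
    have e0 : ((1:ℝ)/2)^n = (2:ℝ)^(-(n:ℝ)) := by
      rw [Real.rpow_neg (by norm_num : (0:ℝ) ≤ 2), Real.rpow_natCast]
      rw [div_pow, one_pow, one_div]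
    rw [e0, ← Real.rpow_add (by norm_num : (0:ℝ) < 2),
      ← Real.rpow_add (by norm_num : (0:ℝ) < 2),
      ← rpow_mul_nat 2 (α - 1 + binH lam) n]
    congr 1
    ring
  exact le_trans step1 (step2.trans (le_of_eq step3))

lemma converse_gamma (hX : ∀ n (x : Word Bool n),
      (X n).p x = (1 / 2) * ∏ i, Pber (x i) + (1 / 2) * ∏ i, Qber (x i))
    (hD0 : 0 < D) (hDlt : D < 1/2)
    (W : ∀ n, FinDist (Word Bool n × Word Bool n))
    (hmarg : ∀ n x, ∑ y, (W n).p (x, y) = (X n).p x)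
    (hdist : plimsup W (fun n xy => hamδ n xy.1 xy.2 / n) ≤ D)
    {α : ℝ} (hα0 : 0 ≤ α)
    (hα' : Filter.Tendsto (fun n => (W n).prob fun xy => α < iDen (W n) xy)
      Filter.atTop (nhds 0))
    {γ : ℝ} (hγ0 : 0 < γ) (hγ : γ ≤ 1/2 - D) : 1 - binH (D + γ) ≤ α := by
  by_contra hcon
  push_neg at hcon
  set lam := D + γ with hlam
  have hlam0 : 0 < lam := by rw [hlam]; linarith
  have hlam2 : lam ≤ 1/2 := by rw [hlam]; linarith
  have hone_mem : (1:ℝ) ∈ {β : ℝ | Filter.Tendsto (fun n =>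
      (W n).prob fun xy => β < hamδ n xy.1 xy.2 / n) Filter.atTop (nhds 0)} := by
    have hz : ∀ n, (W n).prob (fun xy => (1:ℝ) < hamδ n xy.1 xy.2 / n) = 0 := by
      intro n
      refine prob_zero _ fun xy hlt => ?_
      rcases Nat.eq_zero_or_pos n with h0 | hpos
      · subst h0
        rw [show ((0:ℕ):ℝ) = 0 from Nat.cast_zero, div_zero] at hlt
        linarith
      · have hn' : (0:ℝ) < n := by exact_mod_cast hpos
        have hdle : (hammingDist xy.1 xy.2 : ℝ) ≤ n := by
          have := hammingDist_le_card_fintype (x := xy.1) (y := xy.2)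
          simp only [Fintype.card_fin] at this
          exact_mod_cast this
        have h3 := (lt_div_iff₀ hn').mp hlt
        have h2 : hamδ n xy.1 xy.2 = (hammingDist xy.1 xy.2 : ℝ) := rfl
        rw [h2] at h3
        linarith
    show Filter.Tendsto _ _ _
    have heq : (fun n => (W n).prob fun xy => (1:ℝ) < hamδ n xy.1 xy.2 / n)
        = fun _ => (0:ℝ) := funext hz
    rw [heq]
    exact tendsto_const_nhds
  obtain ⟨β, hβmem, hβlt⟩ := exists_lt_of_csInf_lt ⟨1, hone_mem⟩
    (lt_of_le_of_lt hdist (by linarith : D < lam))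
  set ρ := (2:ℝ)^(α - 1 + binH lam) with hρ
  have hρ1 : ρ < 1 := Real.rpow_lt_one_of_one_lt_of_neg (by norm_num) (by linarith)
  have hρ0 : 0 ≤ ρ := Real.rpow_nonneg (by norm_num) _
  set θ₀ := ((3:ℝ)/2) * (2:ℝ)^(-(3:ℝ)/5) with hθ₀
  have hθ₀0 : 0 ≤ θ₀ := by positivity
  have hθ₀1 : θ₀ < 1 := by
    have hE : (-(3:ℝ)/5) = -((3:ℝ)/5) := by norm_num
    rw [hθ₀, hE, Real.rpow_neg (by norm_num : (0:ℝ) ≤ 2), ← div_eq_mul_inv,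
      div_lt_one (Real.rpow_pos_of_pos (by norm_num) _)]
    exact three_half_lt_rpow
  have hlow : ∀ n : ℕ, 1 ≤ n →
      1/2 - (1/2) * θ₀^n
        - (W n).prob (fun xy => α < iDen (W n) xy)
        - (W n).prob (fun xy => β < hamδ n xy.1 xy.2 / n)
      ≤ ρ^n := by
    intro n hn
    have hn' : (0:ℝ) < n := by exact_mod_cast hn
    have hup := converse_upper n hn (W n) (hmarg n) hα0 hlam0 hlam2
    have hC := probC_ge hX n (W n) (hmarg n)
    rw [← hθ₀] at hC
    have h3 : (W n).prob (fun xy => (X n).p xy.1 ≤ (1/2:ℝ)^n)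
        ≤ (W n).prob (fun xy => (¬ (α < iDen (W n) xy))
            ∧ ((hammingDist xy.1 xy.2:ℝ) ≤ n*lam) ∧ ((X n).p xy.1 ≤ (1/2:ℝ)^n))
          + (W n).prob (fun xy => α < iDen (W n) xy)
          + (W n).prob (fun xy => β < hamδ n xy.1 xy.2 / n) := by
      refine prob_le_three (W n) fun xy hCxy => ?_
      by_cases hG : α < iDen (W n) xy
      · exact Or.inr (Or.inl hG)
      by_cases hH : β < hamδ n xy.1 xy.2 / n
      · exact Or.inr (Or.inr hH)
      refine Or.inl ⟨hG, ?_, hCxy⟩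
      push_neg at hH
      have h2 : hamδ n xy.1 xy.2 = (hammingDist xy.1 xy.2 : ℝ) := rfl
      have h4 := (div_le_iff₀ hn').mp hH
      rw [h2] at h4
      calc (hammingDist xy.1 xy.2:ℝ) ≤ β * n := h4
      _ ≤ lam * n := mul_le_mul_of_nonneg_right (le_of_lt hβlt) hn'.le
      _ = n * lam := by ring
    have hρn : (W n).prob (fun xy => (¬ (α < iDen (W n) xy))
        ∧ ((hammingDist xy.1 xy.2:ℝ) ≤ n*lam) ∧ ((X n).p xy.1 ≤ (1/2:ℝ)^n)) ≤ ρ^n := hup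
    linarith
  have hθt : Filter.Tendsto (fun n:ℕ => θ₀^n) Filter.atTop (nhds 0) :=
    tendsto_pow_atTop_nhds_zero_of_lt_one hθ₀0 hθ₀1
  have hβt : Filter.Tendsto (fun n => (W n).prob fun xy => β < hamδ n xy.1 xy.2 / n)
      Filter.atTop (nhds 0) := hβmem
  have hLHS : Filter.Tendsto (fun n => 1/2 - (1/2)*θ₀^n
      - (W n).prob (fun xy => α < iDen (W n) xy)
      - (W n).prob (fun xy => β < hamδ n xy.1 xy.2 / n)) Filter.atTop (nhds (1/2)) := by
    have h := ((tendsto_const_nhds (x := (1/2:ℝ)) (f := Filter.atTop (α := ℕ))).sub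
      (hθt.const_mul (1/2))).sub hα' |>.sub hβt
    simpa using h
  have hRHS : Filter.Tendsto (fun n:ℕ => ρ^n) Filter.atTop (nhds 0) :=
    tendsto_pow_atTop_nhds_zero_of_lt_one hρ0 hρ1
  have hfin := le_of_tendsto_of_tendsto hLHS hRHS
    (Filter.eventually_atTop.mpr ⟨1, hlow⟩)
  norm_num at hfin

lemma converse (hX : ∀ n (x : Word Bool n),
      (X n).p x = (1 / 2) * ∏ i, Pber (x i) + (1 / 2) * ∏ i, Qber (x i))
    (hD0 : 0 < D) (hD : D ≤ 1/2)
    (W : ∀ n, FinDist (Word Bool n × Word Bool n))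
    (hW : W ∈ Admissible X hamδ D) : 1 - binH D ≤ Ibar 2 W := by
  obtain ⟨hmarg, hdist⟩ := hW
  rw [Ibar, plimsup]
  refine le_csInf ⟨3, iden_tendsto_three W⟩ fun α hα => ?_
  have hα' : Filter.Tendsto (fun n => (W n).prob fun xy => α < iDen (W n) xy)
      Filter.atTop (nhds 0) := hα
  have hα0 : 0 ≤ α := iden_tendsto_nonneg W hα'
  rcases eq_or_lt_of_le hD with hDeq | hDlt
  · rw [hDeq, binH_half]
    linarith
  · have hkey : ∀ γ : ℝ, 0 < γ → γ ≤ 1/2 - D → 1 - binH (D + γ) ≤ α :=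
      fun γ h1 h2 => converse_gamma hX hD0 hDlt W hmarg hdist hα0 hα' h1 h2
    have hcont : Filter.Tendsto (fun γ : ℝ => 1 - binH (D + γ))
        (nhdsWithin 0 (Set.Ioi 0)) (nhds (1 - binH D)) := by
      have h2 : ContinuousAt binH ((fun γ:ℝ => D + γ) 0) := by
        have := binH_continuousAt hD0 (by linarith : D < 1)
        simpa using this
      have h1 : ContinuousAt (fun γ : ℝ => 1 - binH (D + γ)) 0 :=
        continuousAt_const.sub (h2.comp (by fun_prop))
      have h3 := (h1.continuousWithinAt (s := Set.Ioi 0))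
      have h4 : (1:ℝ) - binH (D + 0) = 1 - binH D := by norm_num
      have h5 : Filter.Tendsto (fun γ : ℝ => 1 - binH (D + γ))
          (nhdsWithin 0 (Set.Ioi 0)) (nhds (1 - binH (D + 0))) := h3
      rw [h4] at h5
      exact h5
    have hev : ∀ᶠ γ in nhdsWithin (0:ℝ) (Set.Ioi 0), 1 - binH (D + γ) ≤ α := by
      have hmem : Set.Ioc (0:ℝ) (1/2 - D) ∈ nhdsWithin (0:ℝ) (Set.Ioi 0) :=
        Ioc_mem_nhdsGT_of_mem ⟨le_refl 0, by linarith⟩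
      filter_upwards [hmem] with γ hγ
      exact hkey γ hγ.1 hγ.2
    exact le_of_tendsto hcont hev
end RDPaux

open RDPaux in
/-- For the mixed source `P_{X^n} = (1/2) P^n + (1/2) Q^n` with Hamming distortion and
base-2 logarithms, and `0 < D ≤ 1/2`: `R ≥ inf_Y Ī(X;Y)` over admissible joint sources
if and only if `R ≥ h(1/2) − h(D) = 1 − h(D)`. -/
theorem mixed_source_inf_Ibar_iff
    (X : ∀ n, FinDist (Word Bool n))
    (hX : ∀ n (x : Word Bool n),
      (X n).p x = (1 / 2) * ∏ i, Pber (x i) + (1 / 2) * ∏ i, Qber (x i))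
    (D : ℝ) (hD0 : 0 < D) (hD : D ≤ 1 / 2) (R : ℝ) :
    sInf (Ibar 2 '' Admissible X hamδ D) ≤ R ↔ binH (1 / 2) - binH D ≤ R := by
  have hD1 : D ≤ 1 := by linarith
  have hmem : bscW X D hD0.le hD1 ∈ Admissible X hamδ D :=
    ⟨fun n x => bscW_marg hD0.le hD1 n x, bsc_plimsup_dist hD0 hD⟩
  have hIb : Ibar 2 (bscW X D hD0.le hD1) ≤ 1 - binH D := bsc_Ibar_le hX hD0 hD
  have himg : Ibar 2 (bscW X D hD0.le hD1) ∈ Ibar 2 '' Admissible X hamδ D :=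
    ⟨bscW X D hD0.le hD1, hmem, rfl⟩
  have hbdd : BddBelow (Ibar 2 '' Admissible X hamδ D) := by
    refine ⟨0, fun v hv => ?_⟩
    obtain ⟨W', _, rfl⟩ := hv
    rw [Ibar, plimsup]
    exact le_csInf ⟨3, iden_tendsto_three W'⟩ fun α hα => iden_tendsto_nonneg W' hα
  have hlb : 1 - binH D ≤ sInf (Ibar 2 '' Admissible X hamδ D) := by
    refine le_csInf ⟨_, himg⟩ fun v hv => ?_
    obtain ⟨W', hW', rfl⟩ := hv
    exact converse hX hD0 hD W' hW'
  have hub : sInf (Ibar 2 '' Admissible X hamδ D) ≤ 1 - binH D :=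
    le_trans (csInf_le hbdd himg) hIb
  rw [binH_half]
  constructor
  · intro h
    linarith
  · intro h
    linarith
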